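/- A semifilter S on ω is a Gδ subset of 2^ω if and only if there exists a monotone lower semicontinuous functional g : P(ω) → [0,∞] such that S = {X : g(X) = ∞}. -/

import Mathlib

open scoped ENNReal

def AlmostSubC (X Y : ℕ → Bool) : Prop :=
  ({n | X n = true} \ {n | Y n = true}).Finite

def IsSemifilterC (S : Set (ℕ → Bool)) : Prop :=
  S.Nonempty ∧ S ≠ Set.univ ∧ ∀ X Y : ℕ → Bool, X ∈ S → AlmostSubC X Y → Y ∈ S

/-- A monotone lower semicontinuous functional on `P(ω)`:
`g(∅) = 0`, `g` is finite on finite sets, monotone under `⊆`, and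
`g(A) = sup_n g(A ∩ [0,n))`. -/
def MonotoneLSC (g : (ℕ → Bool) → ℝ≥0∞) : Prop :=
  g (fun _ => false) = 0 ∧
  (∀ X : ℕ → Bool, {n | X n = true}.Finite → g X < ⊤) ∧
  (∀ X Y : ℕ → Bool, (∀ n, X n = true → Y n = true) → g X ≤ g Y) ∧
  (∀ X : ℕ → Bool, g X = ⨆ n : ℕ, g (fun i => X i && decide (i < n)))

namespace GdAux

def SubF (X Y : ℕ → Bool) : Prop := ∀ n, X n = true → Y n = true

def trunc (n : ℕ) (X : ℕ → Bool) : ℕ → Bool := fun i => X i && decide (i < n)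

def cone (F : ℕ → Bool) : Set (ℕ → Bool) := {Y | SubF F Y}

lemma subF_trunc_self (n : ℕ) (X : ℕ → Bool) : SubF (trunc n X) X := by
  intro i h
  simp [trunc] at h
  exact h.1

lemma subF_trunc_mono_n {m n : ℕ} (h : m ≤ n) (X : ℕ → Bool) :
    SubF (trunc m X) (trunc n X) := by
  intro i hi
  simp [trunc] at hi ⊢
  exact ⟨hi.1, lt_of_lt_of_le hi.2 h⟩

lemma subF_trunc_mono {X Y : ℕ → Bool} (h : SubF X Y) (n : ℕ) :
    SubF (trunc n X) (trunc n Y) := by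
  intro i hi
  simp [trunc] at hi ⊢
  exact ⟨h i hi.1, hi.2⟩

lemma trunc_trunc (n : ℕ) (X : ℕ → Bool) : trunc n (trunc n X) = trunc n X := by
  funext i
  simp [trunc, Bool.and_assoc]

lemma cone_anti {F G : ℕ → Bool} (h : SubF F G) : cone G ⊆ cone F :=
  fun Y hY i hi => hY i (h i hi)

lemma mem_cone_trunc (n : ℕ) (X : ℕ → Bool) : X ∈ cone (trunc n X) :=
  subF_trunc_self n X

lemma isClosed_cone (F : ℕ → Bool) : IsClosed (cone F) := by
  have h : cone F = ⋂ (i : ℕ) (_ : F i = true), {Y : ℕ → Bool | Y i = true} := by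
    ext Y
    simp [cone, SubF]
  rw [h]
  refine isClosed_iInter fun i => isClosed_iInter fun _ => ?_
  exact isClosed_eq (continuous_apply i) continuous_const

lemma exists_cone_subset {S U : Set (ℕ → Bool)}
    (hup : ∀ X Y, X ∈ S → SubF X Y → Y ∈ S)
    (hU : IsOpen U) (hSU : S ⊆ U) {X : ℕ → Bool} (hX : X ∈ S) :
    ∃ n, cone (trunc n X) ⊆ U := by
  by_contra hcon
  push_neg at hcon
  have hne : ∀ n, (cone (trunc n X) ∩ Uᶜ).Nonempty := by
    intro n
    obtain ⟨Y, hY, hYU⟩ := Set.not_subset.mp (hcon n)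
    exact ⟨Y, hY, hYU⟩
  have hdec : ∀ n, cone (trunc (n+1) X) ∩ Uᶜ ⊆ cone (trunc n X) ∩ Uᶜ := by
    intro n
    exact Set.inter_subset_inter_left _ (cone_anti (subF_trunc_mono_n (Nat.le_succ n) X))
  have hcl : ∀ n, IsClosed (cone (trunc n X) ∩ Uᶜ) := fun n =>
    (isClosed_cone _).inter hU.isClosed_compl
  have hcpt : IsCompact (cone (trunc 0 X) ∩ Uᶜ) := (hcl 0).isCompact
  obtain ⟨Y, hY⟩ := IsCompact.nonempty_iInter_of_sequence_nonempty_isCompact_isClosed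
    _ hdec hne hcpt hcl
  simp only [Set.mem_iInter, Set.mem_inter_iff] at hY
  have hXY : SubF X Y := by
    intro i hi
    have := (hY (i+1)).1
    exact this i (by simp [trunc, hi])
  exact (hY 0).2 (hSU (hup X Y hX hXY))


lemma trunc_eq_of_agree {X F : ℕ → Bool} {n : ℕ} (h : ∀ i, i < n → X i = F i) :
    trunc n X = trunc n F := by
  funext i
  by_cases hi : i < n
  · simp [trunc, hi, h i hi]
  · simp [trunc, hi]

lemma isOpen_trunc_pred (p : (ℕ → Bool) → Prop) (n : ℕ) : IsOpen {X | p (trunc n X)} := by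
  have h : {X | p (trunc n X)} =
      ⋃ (F : ℕ → Bool) (_ : p (trunc n F)),
        ⋂ i ∈ Finset.range n, {X : ℕ → Bool | X i = F i} := by
    ext X
    simp only [Set.mem_setOf_eq, Set.mem_iUnion, Set.mem_iInter, Finset.mem_range]
    constructor
    · intro hX
      exact ⟨X, hX, fun i _ => rfl⟩
    · rintro ⟨F, hF, hagree⟩
      rwa [trunc_eq_of_agree fun i hi => hagree i hi]
  rw [h]
  refine isOpen_iUnion fun F => isOpen_iUnion fun _ => ?_
  refine isOpen_biInter_finset fun i _ => ?_
  exact IsOpen.preimage (continuous_apply i : Continuous fun X : ℕ → Bool => X i)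
    (isOpen_discrete ({F i} : Set Bool))

open Classical in
noncomputable def gfun (U : ℕ → Set (ℕ → Bool)) (k0 : ℕ) (X : ℕ → Bool) : ℝ≥0∞ :=
  ⨆ k : ℕ, if ∃ n : ℕ, ∀ j ∈ Finset.range (k + k0 + 1), cone (trunc n X) ⊆ U j
    then ((k : ℝ≥0∞) + 1) else 0

lemma gfun_mono (U : ℕ → Set (ℕ → Bool)) (k0 : ℕ) {X Y : ℕ → Bool} (h : SubF X Y) :
    gfun U k0 X ≤ gfun U k0 Y := by
  classical
  rw [gfun, gfun]
  refine iSup_mono fun k => ?_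
  split_ifs with h1 h2
  · exact le_refl _
  · exfalso
    obtain ⟨n, hn⟩ := h1
    exact h2 ⟨n, fun j hj => (cone_anti (subF_trunc_mono h n)).trans (hn j hj)⟩
  · exact zero_le
  · exact le_refl _

lemma gfun_lsc (U : ℕ → Set (ℕ → Bool)) (k0 : ℕ) (X : ℕ → Bool) :
    gfun U k0 X = ⨆ n : ℕ, gfun U k0 (trunc n X) := by
  classical
  refine le_antisymm ?_ (iSup_le fun n => gfun_mono U k0 (subF_trunc_self n X))
  conv_lhs => rw [gfun]
  refine iSup_le fun k => ?_
  split_ifs with h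
  · obtain ⟨n, hn⟩ := h
    have h1 : ((k : ℝ≥0∞) + 1) ≤ gfun U k0 (trunc n X) := by
      rw [gfun]
      refine le_trans ?_ (le_iSup _ k)
      rw [if_pos ⟨n, by rw [trunc_trunc]; exact hn⟩]
    exact h1.trans (le_iSup (fun n => gfun U k0 (trunc n X)) n)
  · exact zero_le

lemma gfun_empty (U : ℕ → Set (ℕ → Bool)) {k0 : ℕ} (h0 : (fun _ => false) ∉ U k0) :
    gfun U k0 (fun _ => false) = 0 := by
  classical
  rw [gfun]
  refine le_antisymm (iSup_le fun k => ?_) (zero_le)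
  rw [if_neg]
  rintro ⟨n, hn⟩
  have h1 : cone (trunc n (fun _ => false)) ⊆ U k0 :=
    hn k0 (Finset.mem_range.mpr (by omega))
  refine h0 (h1 ?_)
  intro i hi
  simp [trunc] at hi

lemma gfun_top_of_forall (U : ℕ → Set (ℕ → Bool)) (k0 : ℕ) {X : ℕ → Bool}
    (h : ∀ k : ℕ, ∃ n : ℕ, ∀ j ∈ Finset.range (k + k0 + 1), cone (trunc n X) ⊆ U j) :
    gfun U k0 X = ⊤ := by
  classical
  by_contra hne
  obtain ⟨m, hm⟩ := ENNReal.exists_nat_gt hne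
  have h1 : ((m : ℝ≥0∞) + 1) ≤ gfun U k0 X := by
    rw [gfun]
    refine le_trans ?_ (le_iSup _ m)
    rw [if_pos (h m)]
  have h2 : (m : ℝ≥0∞) < gfun U k0 X :=
    lt_of_lt_of_le (by simp [ENNReal.lt_add_right, ENNReal.natCast_lt_top m]) h1
  exact absurd (h2.trans hm) (lt_irrefl _)

lemma gfun_cond_of_top (U : ℕ → Set (ℕ → Bool)) (k0 : ℕ) {X : ℕ → Bool}
    (h : gfun U k0 X = ⊤) :
    ∀ k : ℕ, ∃ n : ℕ, ∀ j ∈ Finset.range (k + k0 + 1), cone (trunc n X) ⊆ U j := by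
  classical
  by_contra hcon
  push_neg at hcon
  obtain ⟨k1, hk1⟩ := hcon
  have hle : gfun U k0 X ≤ ((k1 : ℝ≥0∞) + 1) := by
    rw [gfun]
    refine iSup_le fun k => ?_
    split_ifs with hc
    · have hkk : k < k1 := by
        by_contra hge
        push_neg at hge
        obtain ⟨n, hn⟩ := hc
        obtain ⟨j, hj, hjn⟩ := hk1 n
        exact hjn (hn j (Finset.mem_range.mpr
          (by have := Finset.mem_range.mp hj; omega)))
      exact add_le_add_left (Nat.cast_le.mpr hkk.le) 1
    · exact zero_le
  rw [h] at hle
  exact absurd (top_le_iff.mp hle) (by simp)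

lemma gfun_mem_iInter (U : ℕ → Set (ℕ → Bool)) (k0 : ℕ) {X : ℕ → Bool}
    (h : gfun U k0 X = ⊤) : X ∈ ⋂ j, U j := by
  refine Set.mem_iInter.mpr fun j => ?_
  obtain ⟨n, hn⟩ := gfun_cond_of_top U k0 h j
  exact hn j (Finset.mem_range.mpr (by omega)) (mem_cone_trunc n X)


end GdAux

open GdAux in
theorem gdelta_forward (S : Set (ℕ → Bool)) (hS : IsSemifilterC S)
    (U : ℕ → Set (ℕ → Bool)) (hUo : ∀ k, IsOpen (U k)) (hSU : S = ⋂ k, U k) :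
    ∃ g : (ℕ → Bool) → ℝ≥0∞, MonotoneLSC g ∧ S = {X | g X = ⊤} := by
  classical
  obtain ⟨hne, hnu, hclosed⟩ := hS
  have hup : ∀ X Y, X ∈ S → SubF X Y → Y ∈ S := by
    intro X Y hX h
    refine hclosed X Y hX ?_
    have hd : {n | X n = true} \ {n | Y n = true} = ∅ := by
      ext i
      simp only [Set.mem_diff, Set.mem_setOf_eq, Set.mem_empty_iff_false, iff_false,
        not_and, not_not]
      exact h i
    rw [AlmostSubC, hd]
    exact Set.finite_empty
  have hempty : (fun _ => false) ∉ S := by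
    intro h0
    apply hnu
    ext Y
    simp only [Set.mem_univ, iff_true]
    exact hclosed _ Y h0 (by simp [AlmostSubC])
  obtain ⟨k0, hk0⟩ : ∃ k0, (fun _ => false) ∉ U k0 := by
    by_contra hcc
    push_neg at hcc
    exact hempty (hSU ▸ Set.mem_iInter.mpr hcc)
  have hSsub : ∀ j, S ⊆ U j := fun j => hSU ▸ Set.iInter_subset U j
  have hStop : ∀ X ∈ S, gfun U k0 X = ⊤ := by
    intro X hX
    refine gfun_top_of_forall U k0 fun k => ?_
    have hXj : ∀ j, ∃ n, cone (trunc n X) ⊆ U j := fun j =>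
      exists_cone_subset hup (hUo j) (hSsub j) hX
    choose f hf using hXj
    refine ⟨(Finset.range (k + k0 + 1)).sup f, fun j hj => ?_⟩
    exact (cone_anti (subF_trunc_mono_n (Finset.le_sup hj) X)).trans (hf j)
  have hmemS : ∀ X : ℕ → Bool, gfun U k0 X = ⊤ → X ∈ S := fun X h =>
    hSU ▸ gfun_mem_iInter U k0 h
  refine ⟨gfun U k0, ⟨gfun_empty U hk0, ?_, ?_, ?_⟩, ?_⟩
  · intro X hfin
    rw [lt_top_iff_ne_top]
    intro htop
    have hX : X ∈ S := hmemS X htop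
    refine hempty (hclosed X (fun _ => false) hX ?_)
    exact (hfin.subset (Set.diff_subset))
  · intro X Y h
    exact gfun_mono U k0 h
  · intro X
    exact gfun_lsc U k0 X
  · ext X
    exact ⟨fun h => hStop X h, fun h => hmemS X h⟩

theorem gdelta_iff_functional' (S : Set (ℕ → Bool)) (hS : IsSemifilterC S) :
    IsGδ S ↔ ∃ g : (ℕ → Bool) → ℝ≥0∞, MonotoneLSC g ∧ S = {X | g X = ⊤} := by
  constructor
  · intro h
    obtain ⟨U, hUo, hSU⟩ := isGδ_iff_eq_iInter_nat.mp h
    exact gdelta_forward S hS U hUo hSU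
  · rintro ⟨g, ⟨hg0, hgfin, hgmono, hglsc⟩, rfl⟩
    have hset : {X | g X = ⊤} =
        ⋂ k : ℕ, ⋃ n : ℕ, {X : ℕ → Bool | (k : ℝ≥0∞) < g (GdAux.trunc n X)} := by
      ext X
      simp only [Set.mem_setOf_eq, Set.mem_iInter, Set.mem_iUnion]
      constructor
      · intro h k
        have hk : (k : ℝ≥0∞) < ⨆ n : ℕ, g (fun i => X i && decide (i < n)) := by
          rw [← hglsc X, h]
          exact ENNReal.natCast_lt_top k
        exact lt_iSup_iff.mp hk
      · intro h
        by_contra hne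
        obtain ⟨k, hk⟩ := ENNReal.exists_nat_gt hne
        obtain ⟨n, hn⟩ := h k
        have hle : g (GdAux.trunc n X) ≤ g X := hgmono _ _ (GdAux.subF_trunc_self n X)
        exact absurd (hn.trans_le hle) (not_lt.mpr hk.le)
    rw [hset]
    exact IsGδ.iInter_of_isOpen fun k =>
      isOpen_iUnion fun n => GdAux.isOpen_trunc_pred (fun Y => (k : ℝ≥0∞) < g Y) n


/-- A semifilter is `Gδ` in `2^ω` iff it is the set of sets of infinite value of some
monotone lower semicontinuous functional. -/
theorem gdelta_iff_functional (S : Set (ℕ → Bool)) (hS : IsSemifilterC S) :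
    IsGδ S ↔ ∃ g : (ℕ → Bool) → ℝ≥0∞, MonotoneLSC g ∧ S = {X | g X = ⊤} :=
  gdelta_iff_functional' S hS
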